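/- Let 1 < a ≤ 2, M_a > 0, δ > 0, x ∈ ℝ, and set h = (2δ/(M_a(a−1)))^{1/a}. Suppose f : ℝ → ℝ is differentiable on [x−h, x+h] and |f'(u) − f'(v)| ≤ M_a·|u − v|^{a−1} for all u, v ∈ [x−h, x+h], and suppose f_δ : ℝ → ℝ satisfies |f_δ(x+h) − f(x+h)| ≤ δ and |f_δ(x−h) − f(x−h)| ≤ δ. Then |(f_δ(x+h) − f_δ(x−h))/(2h) − f'(x)| ≤ a·M_a^{1/a}·(2/(a−1))^{(a−1)/a}·δ^{(a−1)/a}. -/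

import Mathlib

/-- Hölder-class stable differentiation with noisy data.  With
`h = (2δ/(M_a(a-1)))^(1/a)` and `f'` `(a-1)`-Hölder with constant `M_a` on
`[x-h, x+h]`, the symmetric difference quotient of the noisy data estimates
`f'(x)` with error `≤ a·M_a^(1/a)·(2/(a-1))^((a-1)/a)·δ^((a-1)/a)`. -/
theorem holder_stable_diff_error
    (a Ma δ x h : ℝ) (ha1 : 1 < a) (ha2 : a ≤ 2) (hMa : 0 < Ma) (hδ : 0 < δ)
    (hh : h = (2 * δ / (Ma * (a - 1))) ^ (1 / a))
    (f f' fδ : ℝ → ℝ)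
    (hder : ∀ t ∈ Set.Icc (x - h) (x + h), HasDerivAt f (f' t) t)
    (hHolder : ∀ u ∈ Set.Icc (x - h) (x + h), ∀ v ∈ Set.Icc (x - h) (x + h),
      |f' u - f' v| ≤ Ma * |u - v| ^ (a - 1))
    (hnoise1 : |fδ (x + h) - f (x + h)| ≤ δ)
    (hnoise2 : |fδ (x - h) - f (x - h)| ≤ δ) :
    |(fδ (x + h) - fδ (x - h)) / (2 * h) - f' x| ≤
      a * Ma ^ (1 / a) * (2 / (a - 1)) ^ ((a - 1) / a) * δ ^ ((a - 1) / a) := by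
  have ha0 : 0 < a := lt_trans one_pos ha1
  have ha1' : 0 < a - 1 := by linarith
  have hKpos : 0 < 2 * δ / (Ma * (a - 1)) := by positivity
  have hpos : 0 < h := by rw [hh]; exact Real.rpow_pos_of_pos hKpos _
  -- h ^ a = 2δ / (Ma (a-1))
  have hha : h ^ a = 2 * δ / (Ma * (a - 1)) := by
    rw [hh, ← Real.rpow_mul hKpos.le, one_div_mul_cancel (ne_of_gt ha0), Real.rpow_one]
  -- δ in terms of h
  have hδeq : δ = Ma * (a - 1) * h ^ a / 2 := by
    field_simp at hha ⊢; linarith [hha]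
  -- membership facts
  have hx1 : x + h ∈ Set.Icc (x - h) (x + h) := by
    constructor <;> nlinarith
  have hx2 : x - h ∈ Set.Icc (x - h) (x + h) := by
    constructor <;> nlinarith
  have hx0 : x ∈ Set.Icc (x - h) (x + h) := by
    constructor <;> nlinarith
  -- Taylor-type bound via MVT on g t = f t - f' x * t
  have key : |f (x + h) - f (x - h) - f' x * (2 * h)| ≤ Ma * h ^ (a - 1) * (2 * h) := by
    have hg : ∀ t ∈ Set.Icc (x - h) (x + h),
        HasDerivWithinAt (fun y => f y - f' x * y) (f' t - f' x) (Set.Icc (x - h) (x + h)) t := by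
      intro t ht
      have := ((hder t ht).sub (((hasDerivAt_id t).const_mul (f' x))))
      simp only [id_eq, mul_one] at this
      exact this.hasDerivWithinAt
    have hbound : ∀ t ∈ Set.Icc (x - h) (x + h), ‖f' t - f' x‖ ≤ Ma * h ^ (a - 1) := by
      intro t ht
      have h1 := hHolder t ht x hx0
      have h2 : |t - x| ≤ h := by
        rw [abs_le]; constructor <;> [linarith [ht.1]; linarith [ht.2]]
      have h3 : |t - x| ^ (a - 1) ≤ h ^ (a - 1) :=
        Real.rpow_le_rpow (abs_nonneg _) h2 (le_of_lt ha1')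
      calc ‖f' t - f' x‖ = |f' t - f' x| := rfl
        _ ≤ Ma * |t - x| ^ (a - 1) := h1
        _ ≤ Ma * h ^ (a - 1) := by nlinarith
    have := (convex_Icc (x - h) (x + h)).norm_image_sub_le_of_norm_hasDerivWithin_le
      hg hbound hx2 hx1
    have heq : (f (x + h) - f' x * (x + h)) - (f (x - h) - f' x * (x - h))
        = f (x + h) - f (x - h) - f' x * (2 * h) := by ring
    have hnorm : ‖(x + h) - (x - h)‖ = 2 * h := by
      rw [Real.norm_eq_abs]
      rw [abs_of_nonneg (by linarith)]
      ring
    calc |f (x + h) - f (x - h) - f' x * (2 * h)|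
        = ‖(f (x + h) - f' x * (x + h)) - (f (x - h) - f' x * (x - h))‖ := by
          rw [heq]; rfl
      _ ≤ Ma * h ^ (a - 1) * ‖(x + h) - (x - h)‖ := this
      _ = Ma * h ^ (a - 1) * (2 * h) := by rw [hnorm]
  -- combine with noise
  have main : |(fδ (x + h) - fδ (x - h)) / (2 * h) - f' x| ≤ δ / h + Ma * h ^ (a - 1) := by
    have h2h : (0:ℝ) < 2 * h := by linarith
    have hsplit : (fδ (x + h) - fδ (x - h)) / (2 * h) - f' x
        = ((fδ (x + h) - f (x + h)) - (fδ (x - h) - f (x - h))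
            + (f (x + h) - f (x - h) - f' x * (2 * h))) / (2 * h) := by
      field_simp; ring
    rw [hsplit, abs_div, abs_of_pos h2h, div_le_iff₀ h2h]
    have htri : |(fδ (x + h) - f (x + h)) - (fδ (x - h) - f (x - h))
        + (f (x + h) - f (x - h) - f' x * (2 * h))|
        ≤ |fδ (x + h) - f (x + h)| + |fδ (x - h) - f (x - h)|
          + |f (x + h) - f (x - h) - f' x * (2 * h)| := by
      calc _ ≤ |(fδ (x + h) - f (x + h)) - (fδ (x - h) - f (x - h))|
            + |f (x + h) - f (x - h) - f' x * (2 * h)| := abs_add_le _ _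
        _ ≤ _ := by
            have := abs_sub (fδ (x + h) - f (x + h)) (fδ (x - h) - f (x - h))
            linarith
    have : |(fδ (x + h) - f (x + h)) - (fδ (x - h) - f (x - h))
        + (f (x + h) - f (x - h) - f' x * (2 * h))|
        ≤ δ + δ + Ma * h ^ (a - 1) * (2 * h) := by linarith
    calc |(fδ (x + h) - f (x + h)) - (fδ (x - h) - f (x - h))
        + (f (x + h) - f (x - h) - f' x * (2 * h))|
        ≤ δ + δ + Ma * h ^ (a - 1) * (2 * h) := this
      _ = (δ / h + Ma * h ^ (a - 1)) * (2 * h) := by field_simp; ring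
  -- arithmetic: δ/h + Ma h^(a-1) ≤ a Ma h^(a-1) and equals RHS
  have hha1 : h ^ (a - 1) = h ^ a / h := by
    rw [Real.rpow_sub hpos, Real.rpow_one]
  have hstep : δ / h + Ma * h ^ (a - 1) ≤ a * (Ma * h ^ (a - 1)) := by
    have hδh : δ / h = Ma * (a - 1) * h ^ (a - 1) / 2 := by
      rw [hδeq, hha1]; field_simp
    have hp : 0 < h ^ (a - 1) := Real.rpow_pos_of_pos hpos _
    rw [hδh]; nlinarith
  -- Ma * h^(a-1) equals the RHS constant times δ^((a-1)/a)
  have hrhs : Ma * h ^ (a - 1) = Ma ^ (1 / a) * (2 / (a - 1)) ^ ((a - 1) / a) * δ ^ ((a - 1) / a) := by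
    have hK : 2 * δ / (Ma * (a - 1)) = 2 / (a - 1) * δ / Ma := by field_simp
    have h1 : h ^ (a - 1) = (2 / (a - 1) * δ / Ma) ^ ((a - 1) / a) := by
      rw [hh, ← Real.rpow_mul (le_of_lt hKpos), hK]
      congr 1
      field_simp
    have h2 : (2 / (a - 1) * δ / Ma) ^ ((a - 1) / a)
        = (2 / (a - 1)) ^ ((a - 1) / a) * δ ^ ((a - 1) / a) / Ma ^ ((a - 1) / a) := by
      rw [Real.div_rpow (by positivity) (le_of_lt hMa),
        Real.mul_rpow (by positivity) (le_of_lt hδ)]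
    have h3 : Ma / Ma ^ ((a - 1) / a) = Ma ^ (1 / a) := by
      have he : 1 / a = 1 - (a - 1) / a := by field_simp; ring
      rw [he, Real.rpow_sub hMa, Real.rpow_one]
    rw [h1, h2]
    rw [← h3]
    field_simp
  calc |(fδ (x + h) - fδ (x - h)) / (2 * h) - f' x|
      ≤ δ / h + Ma * h ^ (a - 1) := main
    _ ≤ a * (Ma * h ^ (a - 1)) := hstep
    _ = a * Ma ^ (1 / a) * (2 / (a - 1)) ^ ((a - 1) / a) * δ ^ ((a - 1) / a) := by
        rw [hrhs]; ring
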